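/- (Proposition 4, mathematical core.) Let λ ≥ 0 and let S_out be a nonempty subset of V that maximizes H_λ over all nonempty subsets of V, and suppose c(S_out) ≥ θ. Then for every nonempty subset S ⊆ V with c(S) ≥ θ, d(S_out) ≥ d(S) − λ·(c(S_out) − θ); in particular d(S_out) ≥ OPT − λ·(c(S_out) − θ), where OPT is the maximum density over all nonempty feasible subsets. -/
import Mathlib


/-- The number of edges of `G` with both endpoints in `S`, divided by `|S|`. -/
noncomputable def density {V : Type*} (G : SimpleGraph V) (S : Finset V) : ℝ :=
  ({e ∈ G.edgeSet | ∀ v ∈ e, v ∈ S} : Set (Sym2 V)).ncard / S.card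

/-- The average agreement value over `S`. -/
noncomputable def agreement {V : Type*} (c : V → ℝ) (S : Finset V) : ℝ :=
  (∑ v ∈ S, c v) / S.card

/-- The Lagrangian objective `H_λ(S) = d(S) + λ (c(S) - θ)`. -/
noncomputable def Hval {V : Type*} (G : SimpleGraph V) (c : V → ℝ) (θ l : ℝ)
    (S : Finset V) : ℝ :=
  density G S + l * (agreement c S - θ)

/-- Proposition 4 (mathematical core): if `S_out` maximizes `H_λ` over nonempty subsets and is
feasible, then its density is within additive `λ (c(S_out) - θ)` of the optimum of Q-DISCO. -/
theorem qLagrange_aposteriori {V : Type*} [Fintype V] [Nonempty V]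
    (G : SimpleGraph V) (c : V → ℝ) (θ : ℝ)
    (l : ℝ) (hl : 0 ≤ l) (Sout : Finset V) (hSout : Sout.Nonempty)
    (hopt : ∀ S : Finset V, S.Nonempty → Hval G c θ l S ≤ Hval G c θ l Sout)
    (hfeas : θ ≤ agreement c Sout) :
    ∀ S : Finset V, S.Nonempty → θ ≤ agreement c S →
      density G S - l * (agreement c Sout - θ) ≤ density G Sout := by
  intro S hS hSf
  have h := hopt S hS
  unfold Hval at h
  nlinarith [mul_nonneg hl (sub_nonneg.2 hSf)]
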